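/- For all integers k ≥ 0, τ ≥ 1 and every real κ with 0 < κ ≤ 1, there exists an integer K with the following property: for every blockade B = (B_1, …, B_K) of width W in a graph, there is an equicardinal minor B' of B of length k and width at least κ^{2^K·τ^τ}·W, such that B' is τ-support-uniform and (κ, τ)-support-invariant. -/

import Mathlib

open Finset

open scoped Classical

variable {V : Type*}

/-- No edges between `A` and `B`. -/
def Anticomplete (G : SimpleGraph V) (A B : Finset V) : Prop :=
  ∀ a ∈ A, ∀ b ∈ B, ¬ G.Adj a b

/-- All edges between `A` and `B` are present. -/
def CompletePair (G : SimpleGraph V) (A B : Finset V) : Prop :=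
  ∀ a ∈ A, ∀ b ∈ B, G.Adj a b

/-- `G` is `ε`-coherent. -/
def Coherent (G : SimpleGraph V) [Fintype V] (ε : ℝ) : Prop :=
  1 < Fintype.card V ∧
  (∀ v : V, (G.degree v : ℝ) < ε * Fintype.card V) ∧
  ¬ ∃ A B : Finset V, Disjoint A B ∧ Anticomplete G A B ∧
      ε * Fintype.card V ≤ A.card ∧ ε * Fintype.card V ≤ B.card

/-- `G` contains an induced copy of `H`. -/
def Contains {W : Type*} (G : SimpleGraph V) (H : SimpleGraph W) : Prop :=
  ∃ f : W ↪ V, ∀ a b, G.Adj (f a) (f b) ↔ H.Adj a b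

/-- Size of the largest clique. -/
noncomputable def cliqueNumber (G : SimpleGraph V) [Fintype V] : ℕ :=
  sSup {n | ∃ s : Finset V, G.IsNClique n s}

/-- A blockade: pairwise disjoint nonempty blocks. -/
def IsBlockade {K : ℕ} (B : Fin K → Finset V) : Prop :=
  (∀ i, (B i).Nonempty) ∧ Pairwise fun i j => Disjoint (B i) (B j)

/-- Width of a blockade: minimum block size. -/
noncomputable def blockWidth {K : ℕ} (B : Fin K → Finset V) : ℕ :=
  ⨅ i, (B i).card

/-- A rainbow copy of the ordered graph `J` with blocks given by the strictly
monotone map `ι`. -/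
def RainbowCopy (G : SimpleGraph V) {K : ℕ} (B : Fin K → Finset V) {m : ℕ}
    (J : SimpleGraph (Fin m)) (ι : Fin m → Fin K) : Prop :=
  StrictMono ι ∧ ∃ f : Fin m → V, (∀ a, f a ∈ B (ι a)) ∧
    ∀ a b, G.Adj (f a) (f b) ↔ J.Adj a b

/-- The trace of the ordered graph `J` relative to a blockade. -/
def Trace (G : SimpleGraph V) {K : ℕ} (B : Fin K → Finset V) {m : ℕ}
    (J : SimpleGraph (Fin m)) : Set (Fin m → Fin K) :=
  {ι | RainbowCopy G B J ι}

/-- `τ`-support-uniform: for every ordered tree with at most `τ` vertices, the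
trace is empty or everything. -/
def SupportUniform (G : SimpleGraph V) {K : ℕ} (B : Fin K → Finset V) (τ : ℕ) : Prop :=
  ∀ m : ℕ, m ≤ τ → ∀ J : SimpleGraph (Fin m), J.IsTree →
    Trace G B J = ∅ ∨ Trace G B J = {ι | StrictMono ι}

/-- `B'` is a contraction of `B`. -/
def IsContraction {K : ℕ} (B' B : Fin K → Finset V) : Prop :=
  ∀ i, (B' i).Nonempty ∧ B' i ⊆ B i

/-- `(κ, τ)`-support-invariant: contractions of width at least `κ` times the
width have the same traces of ordered trees with at most `τ` vertices. -/
def SupportInvariant (G : SimpleGraph V) {K : ℕ} (B : Fin K → Finset V)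
    (κ : ℝ) (τ : ℕ) : Prop :=
  ∀ B' : Fin K → Finset V, IsContraction B' B →
    (∀ i, κ * blockWidth B ≤ ((B' i).card : ℝ)) →
    ∀ m : ℕ, m ≤ τ → ∀ J : SimpleGraph (Fin m), J.IsTree →
      Trace G B' J = Trace G B J

/-- `X` `lam`-covers the block `Bi` (with respect to width `w`). -/
def Covers (G : SimpleGraph V) (X Bi : Finset V) (lam : ℝ) (w : ℕ) : Prop :=
  lam * w ≤ ((Bi.filter fun v => ∃ x ∈ X, G.Adj x v).card : ℝ)

/-- `X` `lam`-misses the block `Bi` (with respect to width `w`). -/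
def Misses (G : SimpleGraph V) (X Bi : Finset V) (lam : ℝ) (w : ℕ) : Prop :=
  lam * w ≤ ((Bi.filter fun v => ∀ x ∈ X, ¬ G.Adj x v).card : ℝ)

/-- `lam`-concave (for an equicardinal blockade of width `w`). -/
def Concave (G : SimpleGraph V) {K : ℕ} (B : Fin K → Finset V) (lam : ℝ) (w : ℕ) : Prop :=
  ∀ h1 h2 h3 : Fin K, h1 < h2 → h2 < h3 →
    ∀ X : Finset V,
      (∀ x ∈ X, ∃ i : Fin K, i ≠ h1 ∧ i ≠ h2 ∧ i ≠ h3 ∧ x ∈ B i) →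
      ¬ (Covers G X (B h2) lam w ∧ Misses G X (B h1) lam w ∧ Misses G X (B h3) lam w)

/-- `G` contains a `B`-rainbow induced copy of `T`. -/
def RainbowContains (G : SimpleGraph V) {K : ℕ} (B : Fin K → Finset V)
    {W' : Type*} (T : SimpleGraph W') : Prop :=
  ∃ f : W' ↪ V,
    (∀ a b, G.Adj (f a) (f b) ↔ T.Adj a b) ∧
    (∀ a, ∃ i, f a ∈ B i) ∧
    ∀ a b, a ≠ b → ∀ i, f a ∈ B i → f b ∉ B i

/-- Vertices of the tree `T(δ, η)`: sequences of length at most `η` over `Fin δ`. -/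
def Tvert (δ η : ℕ) : Type := {l : List (Fin δ) // l.length ≤ η}

/-- The tree `T(δ, η)` rooted at the empty sequence: every vertex of depth
`< η` has exactly `δ` children, and all leaves are at depth exactly `η`. -/
def Ttree (δ η : ℕ) : SimpleGraph (Tvert δ η) :=
  SimpleGraph.fromRel fun a b => ∃ x : Fin δ, b.1 = x :: a.1


-- ===================== auxiliary development =====================

theorem myRamsey (C : Type) [Fintype C] [Nonempty C] :
    ∀ m k : ℕ, ∃ R : ℕ, ∀ (α : Type) [LinearOrder α] (A : Finset α) (f : Finset α → C),
      R ≤ A.card → ∃ Y ⊆ A, k ≤ Y.card ∧ ∃ a, ∀ s ⊆ Y, s.card = m → f s = a := by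
  intro m
  induction m with
  | zero =>
    intro k
    refine ⟨k, fun α _ A f hA => ⟨A, Finset.Subset.refl A, hA, f ∅, fun s hs hcard => ?_⟩⟩
    rw [Finset.card_eq_zero] at hcard
    rw [hcard]
  | succ m ih =>
    -- inner lemma
    have inner : ∀ L : ℕ, ∃ R : ℕ, ∀ (α : Type) [LinearOrder α] (A : Finset α) (f : Finset α → C),
        R ≤ A.card → ∃ Y ⊆ A, Y.card = L ∧ ∃ g : α → C,
          ∀ s ⊆ Y, s.card = m + 1 → ∀ hs : s.Nonempty, f s = g (s.min' hs) := by
      intro L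
      induction L with
      | zero =>
        refine ⟨0, fun α _ A f _ => ⟨∅, Finset.empty_subset A, Finset.card_empty, fun _ => f ∅, ?_⟩⟩
        intro s hs hcard _
        have : s = ∅ := Finset.subset_empty.mp hs
        subst this
        simp at hcard
      | succ L ihL =>
        obtain ⟨RL, hRL⟩ := ihL
        obtain ⟨Rm, hRm⟩ := ih RL
        refine ⟨Rm + 1, fun α _ A f hA => ?_⟩
        have hAne : A.Nonempty := Finset.card_pos.mp (by omega)
        set v := A.min' hAne with hv
        have hvA : v ∈ A := A.min'_mem hAne
        have hA' : Rm ≤ (A.erase v).card := by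
          rw [Finset.card_erase_of_mem hvA]; omega
        obtain ⟨Z, hZA, hZcard, av, hav⟩ := hRm α (A.erase v) (fun s => f (insert v s)) hA'
        obtain ⟨Y', hY'Z, hY'card, g', hg'⟩ := hRL α Z f hZcard
        have hvY' : v ∉ Y' := fun h => (Finset.notMem_erase v A) (hZA (hY'Z h))
        refine ⟨insert v Y', ?_, ?_, fun x => if x = v then av else g' x, ?_⟩
        · intro x hx
          rcases Finset.mem_insert.mp hx with h | h
          · rw [h]; exact hvA
          · exact Finset.erase_subset v A (hZA (hY'Z h))
        · rw [Finset.card_insert_of_notMem hvY', hY'card]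
        · intro s hs hcard hsne
          by_cases hvs : v ∈ s
          · have hmin : s.min' hsne = v := by
              apply le_antisymm (Finset.min'_le s v hvs)
              apply A.min'_le
              rcases Finset.mem_insert.mp (hs (s.min'_mem hsne)) with h | h
              · rw [h]; exact hvA
              · exact Finset.erase_subset v A (hZA (hY'Z h))
            rw [hmin]
            simp only [if_pos rfl]
            have hse : s.erase v ⊆ Z := by
              intro x hx
              have hxs := Finset.mem_of_mem_erase hx
              have hxv := Finset.ne_of_mem_erase hx
              rcases Finset.mem_insert.mp (hs hxs) with h | h
              · exact absurd h hxv
              · exact hY'Z h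
            have := hav (s.erase v) hse (by simp [Finset.card_erase_of_mem hvs, hcard])
            rw [Finset.insert_erase hvs] at this
            exact this
          · have hsY' : s ⊆ Y' := by
              intro x hx
              rcases Finset.mem_insert.mp (hs hx) with h | h
              · exact absurd (h ▸ hx) hvs
              · exact h
            have hne : s.min' hsne ≠ v := fun h => hvs (h ▸ s.min'_mem hsne)
            rw [hg' s hsY' hcard hsne]
            simp only [if_neg hne]
    intro k
    obtain ⟨R, hR⟩ := inner (Fintype.card C * k)
    refine ⟨R, fun α _ A f hA => ?_⟩
    obtain ⟨Y, hYA, hYcard, g, hg⟩ := hR α A f hA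
    obtain ⟨a, _, ha⟩ := Finset.exists_le_card_fiber_of_mul_le_card_of_maps_to
      (f := g) (t := (Finset.univ : Finset C)) (fun x _ => Finset.mem_univ (g x))
      Finset.univ_nonempty (by rw [Finset.card_univ, hYcard])
    refine ⟨Y.filter (fun x => g x = a), fun x hx => hYA (Finset.filter_subset _ _ hx), ha, a, ?_⟩
    intro s hs hcard
    have hsne : s.Nonempty := Finset.card_pos.mp (by omega)
    have hsY : s ⊆ Y := fun x hx => Finset.filter_subset _ _ (hs hx)
    rw [hg s hsY hcard hsne]
    have := hs (s.min'_mem hsne)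
    exact (Finset.mem_filter.mp this).2

theorem myRamseyMulti (C : Type) [Fintype C] [Nonempty C] :
    ∀ t k : ℕ, ∃ R : ℕ, ∀ (α : Type) [LinearOrder α] (A : Finset α) (f : ℕ → Finset α → C),
      R ≤ A.card → ∃ Y ⊆ A, k ≤ Y.card ∧ ∀ m ≤ t, ∃ a, ∀ s ⊆ Y, s.card = m → f m s = a := by
  intro t
  induction t with
  | zero =>
    intro k
    obtain ⟨R, hR⟩ := myRamsey C 0 k
    refine ⟨R, fun α _ A f hA => ?_⟩
    obtain ⟨Y, hYA, hYcard, a, ha⟩ := hR α A (f 0) hA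
    exact ⟨Y, hYA, hYcard, fun m hm => le_antisymm hm (Nat.zero_le m) ▸ ⟨a, ha⟩⟩
  | succ t ih =>
    intro k
    obtain ⟨Rt, hRt⟩ := ih k
    obtain ⟨R, hR⟩ := myRamsey C (t+1) Rt
    refine ⟨R, fun α _ A f hA => ?_⟩
    obtain ⟨Y1, hY1A, hY1card, a1, ha1⟩ := hR α A (f (t+1)) hA
    obtain ⟨Y, hYY1, hYcard, hY⟩ := hRt α Y1 f hY1card
    refine ⟨Y, fun x hx => hY1A (hYY1 hx), hYcard, fun m hm => ?_⟩
    rcases Nat.lt_or_ge m (t+1) with h | h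
    · exact hY m (by omega)
    · have hm' : m = t + 1 := by omega
      subst hm'
      exact ⟨a1, fun s hs hc => ha1 s (fun x hx => hYY1 (hs hx)) hc⟩



section AuxDev
variable {V : Type}

noncomputable def muX (G : SimpleGraph V) {K : ℕ} (B : Fin K → Finset V) (τ : ℕ) : ℕ :=
  ∑ m ∈ Finset.range (τ+1), ∑ J ∈ (Finset.univ : Finset (SimpleGraph (Fin m))),
    ((Trace G B J).toFinite.toFinset).card

lemma traceX_mono (G : SimpleGraph V) {K : ℕ} {B B' : Fin K → Finset V}
    (h : ∀ i, B' i ⊆ B i) {m : ℕ} (J : SimpleGraph (Fin m)) :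
    Trace G B' J ⊆ Trace G B J := by
  rintro ι ⟨hmono, f, hf, hadj⟩
  exact ⟨hmono, f, fun a => h _ (hf a), hadj⟩

lemma blockWidthX_eq {K : ℕ} (hK : 0 < K) {B : Fin K → Finset V} {w : ℕ}
    (h : ∀ i, (B i).card = w) : blockWidth B = w := by
  have : Nonempty (Fin K) := ⟨⟨0, hK⟩⟩
  simp only [blockWidth, h]
  exact ciInf_const

lemma blockWidthX_le {K : ℕ} (B : Fin K → Finset V) (i : Fin K) :
    blockWidth B ≤ (B i).card := by
  rw [blockWidth, iInf]
  exact Nat.sInf_le (Set.mem_range_self i)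

lemma loopX (G : SimpleGraph V) {K : ℕ} (hK : 0 < K) (κ : ℝ) (hκ0 : 0 < κ) (hκ1 : κ ≤ 1)
    (τ : ℕ) : ∀ (n : ℕ) (B : Fin K → Finset V) (w : ℕ), 1 ≤ w → (∀ i, (B i).card = w) →
      muX G B τ ≤ n →
    ∃ (B2 : Fin K → Finset V) (w2 : ℕ), 1 ≤ w2 ∧ (∀ i, B2 i ⊆ B i) ∧ (∀ i, (B2 i).card = w2) ∧
      κ ^ n * w ≤ (w2 : ℝ) ∧ SupportInvariant G B2 κ τ := by
  intro n
  induction n with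
  | zero =>
    intro B w hw hcard hmu
    refine ⟨B, w, hw, fun i => Finset.Subset.refl _, hcard, by simp, ?_⟩
    -- mu = 0, all traces empty, so invariant
    intro B'' hc hwid m hm J hJ
    have hempty : Trace G B J = ∅ := by
      by_contra hne
      obtain ⟨ι, hι⟩ := Set.nonempty_iff_ne_empty.mpr hne
      have h1 : 1 ≤ ((Trace G B J).toFinite.toFinset).card := by
        rw [Nat.one_le_iff_ne_zero, ← Nat.pos_iff_ne_zero, Finset.card_pos]
        exact ⟨ι, (Set.Finite.mem_toFinset _).mpr hι⟩
      have h2 : ((Trace G B J).toFinite.toFinset).card ≤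
          ∑ J' ∈ (Finset.univ : Finset (SimpleGraph (Fin m))),
            ((Trace G B J').toFinite.toFinset).card :=
        Finset.single_le_sum (f := fun J' => ((Trace G B J').toFinite.toFinset).card)
          (fun _ _ => Nat.zero_le _) (Finset.mem_univ J)
      have h3 : (∑ J' ∈ (Finset.univ : Finset (SimpleGraph (Fin m))),
            ((Trace G B J').toFinite.toFinset).card) ≤ muX G B τ :=
        Finset.single_le_sum (f := fun m' => ∑ J' ∈ (Finset.univ : Finset (SimpleGraph (Fin m'))),
            ((Trace G B J').toFinite.toFinset).card)
          (fun _ _ => Nat.zero_le _) (Finset.mem_range.mpr (by omega))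
      omega
    have hsub : Trace G B'' J ⊆ Trace G B J := traceX_mono G (fun i => (hc i).2) J
    rw [hempty] at hsub ⊢
    exact Set.subset_eq_empty hsub rfl
  | succ n ih =>
    intro B w hw hcard hmu
    by_cases hsi : SupportInvariant G B κ τ
    · refine ⟨B, w, hw, fun i => Finset.Subset.refl _, hcard, ?_, hsi⟩
      have : κ ^ (n+1) ≤ 1 := pow_le_one₀ hκ0.le hκ1
      nlinarith [(Nat.cast_pos (α := ℝ)).mpr (show 0 < w by omega)]
    · simp only [SupportInvariant] at hsi
      push_neg at hsi
      obtain ⟨B'', hc, hwid, m, hm, J, hJ, hne⟩ := hsi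
      have hsub : ∀ i, B'' i ⊆ B i := fun i => (hc i).2
      have hssub : Trace G B'' J ⊂ Trace G B J :=
        (traceX_mono G hsub J).ssubset_of_ne hne
      obtain ⟨ι, hι, hι'⟩ := Set.exists_of_ssubset hssub
      have hwB : blockWidth B = w := blockWidthX_eq hK hcard
      set n0 := ⌈κ * w⌉₊ with hn0
      have hwpos : (0:ℝ) < w := by exact_mod_cast (show 0 < w by omega)
      have hn0pos : 1 ≤ n0 := Nat.ceil_pos.mpr (by positivity)
      have hn0le : ∀ i, n0 ≤ (B'' i).card := by
        intro i
        apply Nat.ceil_le.mpr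
        have := hwid i
        rwa [hwB] at this
      choose B3 hB3sub hB3card using fun i => Finset.exists_subset_card_eq (hn0le i)
      have hB3B : ∀ i, B3 i ⊆ B i := fun i => (hB3sub i).trans (hsub i)
      have hmu3 : muX G B3 τ < muX G B τ := by
        apply Finset.sum_lt_sum
        · intro m' _
          apply Finset.sum_le_sum
          intro J' _
          exact Finset.card_le_card
            (Set.Finite.toFinset_subset_toFinset.mpr (traceX_mono G hB3B J'))
        · refine ⟨m, Finset.mem_range.mpr (by omega), ?_⟩
          apply Finset.sum_lt_sum
          · intro J' _
            exact Finset.card_le_card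
              (Set.Finite.toFinset_subset_toFinset.mpr (traceX_mono G hB3B J'))
          · refine ⟨J, Finset.mem_univ J, Finset.card_lt_card ?_⟩
            apply Set.Finite.toFinset_ssubset_toFinset.mpr
            constructor
            · exact (traceX_mono G (fun i => hB3sub i) J).trans hssub.subset
            · intro hcontra
              exact hι' ((traceX_mono G (fun i => hB3sub i) J) (hcontra hι))
      obtain ⟨B2, w2, hw2, hB2sub, hB2card, hB2w, hB2inv⟩ :=
        ih B3 n0 hn0pos hB3card (by omega)
      refine ⟨B2, w2, hw2, fun i => (hB2sub i).trans (hB3B i), hB2card, ?_, hB2inv⟩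
      calc κ ^ (n+1) * w = κ ^ n * (κ * w) := by ring
        _ ≤ κ ^ n * n0 := by
            apply mul_le_mul_of_nonneg_left (Nat.le_ceil _) (pow_nonneg hκ0.le n)
        _ ≤ w2 := hB2w

lemma widthZeroX {B : Fin 0 → Finset V} : blockWidth B = 0 := by
  rw [blockWidth, iInf, Set.range_eq_empty]
  exact Nat.sInf_empty

lemma cardGraphLeX (m : ℕ) : Fintype.card (SimpleGraph (Fin m)) ≤ 2 ^ (m*m) := by
  have h := Fintype.card_le_of_injective
    (fun (G : SimpleGraph (Fin m)) => (fun a b => decide (G.Adj a b) : Fin m → Fin m → Bool)) ?_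
  · calc Fintype.card (SimpleGraph (Fin m)) ≤ Fintype.card (Fin m → Fin m → Bool) := h
      _ = 2 ^ (m*m) := by simp [Fintype.card_fun, ← pow_mul]
  · intro G H hGH
    ext a b
    have := congrFun (congrFun hGH a) b
    simpa [decide_eq_decide] using this

lemma sqLeTwoPowX : ∀ M : ℕ, 4 ≤ M → M * M ≤ 2 ^ M := by
  intro M
  induction M with
  | zero => omega
  | succ M ih =>
    intro h
    rcases Nat.lt_or_ge M 4 with h4 | h4
    · have : M = 3 := by omega
      subst this
      norm_num
    · have hM := ih h4
      have h2 : (M+1)*(M+1) ≤ 2*(M*M) := by nlinarith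
      calc (M+1)*(M+1) ≤ 2*(M*M) := h2
        _ ≤ 2*2^M := by omega
        _ = 2^(M+1) := by rw [pow_succ]; ring

lemma muX_le (G : SimpleGraph V) {K : ℕ} (hK : 1 ≤ K) (B : Fin K → Finset V) (τ : ℕ) :
    muX G B τ ≤ (τ+1) * (2^(τ*τ) * K^τ) := by
  have hbound : ∀ m ∈ Finset.range (τ+1),
      (∑ J ∈ (Finset.univ : Finset (SimpleGraph (Fin m))),
        ((Trace G B J).toFinite.toFinset).card) ≤ 2^(τ*τ) * K^τ := by
    intro m hm
    have hm' : m ≤ τ := by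
      rw [Finset.mem_range] at hm; omega
    have h1 : ∀ J : SimpleGraph (Fin m), ((Trace G B J).toFinite.toFinset).card ≤ K^m := by
      intro J
      calc ((Trace G B J).toFinite.toFinset).card
          ≤ Fintype.card (Fin m → Fin K) := Finset.card_le_univ _
        _ = K^m := by simp [Fintype.card_fun]
    calc (∑ J ∈ (Finset.univ : Finset (SimpleGraph (Fin m))),
            ((Trace G B J).toFinite.toFinset).card)
        ≤ (Finset.univ : Finset (SimpleGraph (Fin m))).card • K^m :=
          Finset.sum_le_card_nsmul _ _ _ (fun J _ => h1 J)
      _ = Fintype.card (SimpleGraph (Fin m)) * K^m := by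
          rw [Finset.card_univ, smul_eq_mul]
      _ ≤ 2^(m*m) * K^m := Nat.mul_le_mul_right _ (cardGraphLeX m)
      _ ≤ 2^(τ*τ) * K^τ := by
          apply Nat.mul_le_mul
          · exact Nat.pow_le_pow_right (by norm_num) (Nat.mul_le_mul hm' hm')
          · exact Nat.pow_le_pow_right hK hm'
  calc muX G B τ ≤ (Finset.range (τ+1)).card • (2^(τ*τ) * K^τ) :=
        Finset.sum_le_card_nsmul _ _ _ hbound
    _ = (τ+1) * (2^(τ*τ) * K^τ) := by rw [Finset.card_range, smul_eq_mul]

noncomputable def colorX (G : SimpleGraph V) {K : ℕ} (B2 : Fin K → Finset V) (τ : ℕ)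
    (s : Finset (Fin K)) : ∀ m' : Fin (τ+1), SimpleGraph (Fin (m' : ℕ)) → Bool :=
  fun m' J => if h : s.card = (m' : ℕ) then
    decide (RainbowCopy G B2 J (fun j => s.orderEmbOfFin h j)) else false

lemma colorX_eval (G : SimpleGraph V) {K : ℕ} (B2 : Fin K → Finset V) (τ m : ℕ)
    (hm : m < τ+1) (s : Finset (Fin K)) (h : s.card = m) (J : SimpleGraph (Fin m)) :
    colorX G B2 τ s ⟨m, hm⟩ J = decide (RainbowCopy G B2 J (fun j => s.orderEmbOfFin h j)) :=
  dif_pos h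

end AuxDev

theorem stmt9 (k τ : ℕ) (hτ : 1 ≤ τ) (κ : ℝ) (hκ0 : 0 < κ) (hκ1 : κ ≤ 1) :
    ∃ K : ℕ, ∀ (V : Type) (G : SimpleGraph V) (B : Fin K → Finset V),
      IsBlockade B →
      ∃ (σ : Fin k → Fin K) (B' : Fin k → Finset V),
        StrictMono σ ∧ (∀ i, (B' i).Nonempty ∧ B' i ⊆ B (σ i)) ∧
        (∀ i j, (B' i).card = (B' j).card) ∧
        κ ^ (2 ^ K * τ ^ τ) * (blockWidth B : ℝ) ≤ (blockWidth B' : ℝ) ∧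
        SupportUniform G B' τ ∧ SupportInvariant G B' κ τ := by
  by_cases hk : k = 0
  · -- degenerate case: take K = 0
    subst hk
    refine ⟨0, fun V G B _ => ⟨Fin.elim0, Fin.elim0, fun a => a.elim0, fun i => i.elim0,
      fun i => i.elim0, ?_, ?_, ?_⟩⟩
    · rw [widthZeroX, widthZeroX]
      simp
    · intro m _ J hJ
      left
      obtain ⟨x⟩ := hJ.isConnected.nonempty
      exact Set.eq_empty_iff_forall_notMem.mpr fun ι _ => (ι x).elim0
    · intro B'' _ _ m _ J hJ
      obtain ⟨x⟩ := hJ.isConnected.nonempty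
      ext ι
      exact (ι x).elim0
  · -- main case
    have hkpos : 0 < k := Nat.pos_of_ne_zero hk
    obtain ⟨R, hR⟩ := myRamseyMulti (∀ m' : Fin (τ+1), SimpleGraph (Fin (m' : ℕ)) → Bool) τ k
    set a0 := (τ+1) * 2^(τ*τ) with ha0
    set M := max 4 (max (τ+1) (max a0 (max R k))) with hM
    refine ⟨2^M, ?_⟩
    set K := 2^M with hKdef
    have hM4 : 4 ≤ M := le_max_left _ _
    have hMτ : τ + 1 ≤ M := le_trans (le_max_left _ _) (le_max_right _ _)
    have hMa : a0 ≤ M := le_trans (le_trans (le_max_left _ _) (le_max_right _ _)) (le_max_right _ _)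
    have hMR : R ≤ M := le_trans (le_trans (le_trans (le_max_left _ _) (le_max_right _ _)) (le_max_right _ _)) (le_max_right _ _)
    have hMk : k ≤ M := le_trans (le_trans (le_trans (le_max_right _ _) (le_max_right _ _)) (le_max_right _ _)) (le_max_right _ _)
    have hMK : M < K := Nat.lt_two_pow_self (n := M)
    have hKpos : 0 < K := Nat.pow_pos (n := M) (by norm_num)
    have hKbig : a0 * K^τ ≤ 2^K := by
      calc a0 * K^τ ≤ K * K^τ := Nat.mul_le_mul_right _ (le_of_lt (lt_of_le_of_lt hMa hMK))
        _ = K^(τ+1) := by rw [pow_succ, mul_comm]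
        _ = 2^(M*(τ+1)) := by rw [pow_mul]
        _ ≤ 2^(M*M) := Nat.pow_le_pow_right (by norm_num) (Nat.mul_le_mul_left M hMτ)
        _ ≤ 2^(2^M) := Nat.pow_le_pow_right (by norm_num) (sqLeTwoPowX M hM4)
        _ = 2^K := rfl
    intro V G B hB
    -- equicardinalize
    set W := blockWidth B with hWdef
    have hWex : ∃ i, blockWidth B = (B i).card := by
      have hne : (Set.range fun i : Fin K => (B i).card).Nonempty :=
        ⟨(B ⟨0, hKpos⟩).card, ⟨⟨0, hKpos⟩, rfl⟩⟩
      rw [blockWidth, iInf]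
      obtain ⟨i, hi⟩ := Nat.sInf_mem hne
      exact ⟨i, hi.symm⟩
    have hW1 : 1 ≤ W := by
      obtain ⟨i0, hi0⟩ := hWex
      rw [hWdef, hi0]
      exact Finset.card_pos.mpr (hB.1 i0)
    have hle : ∀ i, W ≤ (B i).card := fun i => blockWidthX_le B i
    choose Beq hBeqsub hBeqcard using fun i => Finset.exists_subset_card_eq (hle i)
    -- support-invariant contraction
    have hmu : muX G Beq τ ≤ 2^K * τ^τ := by
      calc muX G Beq τ ≤ (τ+1) * (2^(τ*τ) * K^τ) := muX_le G hKpos Beq τ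
        _ = a0 * K^τ := by rw [ha0]; ring
        _ ≤ 2^K := hKbig
        _ ≤ 2^K * τ^τ := Nat.le_mul_of_pos_right _ (Nat.pow_pos (n := τ) (by omega))
    obtain ⟨B2, w2, hw2, hB2sub, hB2card, hB2w, hB2inv⟩ :=
      loopX G hKpos κ hκ0 hκ1 τ (2^K * τ^τ) Beq W hW1 hBeqcard hmu
    -- Ramsey
    obtain ⟨Y, hYuniv, hYcard, hmono⟩ := hR (Fin K) Finset.univ
      (fun _ s => colorX G B2 τ s)
      (by rw [Finset.card_univ, Fintype.card_fin]; exact le_trans hMR (le_of_lt hMK))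
    obtain ⟨Y0, hY0Y, hY0card⟩ := Finset.exists_subset_card_eq hYcard
    set σemb := Y0.orderEmbOfFin hY0card with hσemb
    set σ : Fin k → Fin K := ⇑σemb with hσ
    have hσmono : StrictMono σ := σemb.strictMono
    set B' : Fin k → Finset V := fun i => B2 (σ i) with hB'
    have hB'ne : ∀ i, (B' i).Nonempty := fun i =>
      Finset.card_pos.mp (by rw [hB']; rw [hB2card (σ i)]; omega)
    have hBW' : blockWidth B' = w2 := blockWidthX_eq hkpos (fun i => hB2card (σ i))
    have hBW2 : blockWidth B2 = w2 := blockWidthX_eq hKpos hB2card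
    -- key transfer
    have key : ∀ (m : ℕ) (J : SimpleGraph (Fin m)) (ι : Fin m → Fin k),
        RainbowCopy G B' J ι ↔ (StrictMono ι ∧ RainbowCopy G B2 J (σ ∘ ι)) := by
      intro m J ι
      constructor
      · rintro ⟨hι, f, hf, hadj⟩
        exact ⟨hι, hσmono.comp hι, f, hf, hadj⟩
      · rintro ⟨hι, _, f, hf, hadj⟩
        exact ⟨hι, f, hf, hadj⟩
    refine ⟨σ, B', hσmono, fun i => ⟨hB'ne i, le_trans (hB2sub (σ i)) (hBeqsub (σ i))⟩,
      fun i j => by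
        show (B2 (σ i)).card = (B2 (σ j)).card
        rw [hB2card (σ i), hB2card (σ j)], ?_, ?_, ?_⟩
    · -- width
      rw [hBW']
      exact hB2w
    · -- support uniform
      intro m hm J _
      by_cases hne : Trace G B' J = ∅
      · left; exact hne
      · right
        obtain ⟨ι0, hι0⟩ := Set.nonempty_iff_ne_empty.mpr hne
        have hι0' := (key m J ι0).mp hι0
        ext ι
        simp only [Trace, Set.mem_setOf_eq]
        constructor
        · exact fun h => h.1
        · intro hι
          rw [key m J ι]
          refine ⟨hι, ?_⟩
          obtain ⟨a, ha⟩ := hmono m hm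
          set s := Finset.image (σ ∘ ι) Finset.univ with hs
          set s0 := Finset.image (σ ∘ ι0) Finset.univ with hs0
          have hcs : s.card = m := by
            rw [hs, Finset.card_image_of_injective _ ((hσmono.comp hι).injective),
              Finset.card_univ, Fintype.card_fin]
          have hcs0 : s0.card = m := by
            rw [hs0, Finset.card_image_of_injective _ ((hσmono.comp hι0'.1).injective),
              Finset.card_univ, Fintype.card_fin]
          have hsY : s ⊆ Y := by
            intro x hx
            obtain ⟨j, _, rfl⟩ := Finset.mem_image.mp hx
            exact hY0Y (Finset.orderEmbOfFin_mem Y0 hY0card (ι j))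
          have hs0Y : s0 ⊆ Y := by
            intro x hx
            obtain ⟨j, _, rfl⟩ := Finset.mem_image.mp hx
            exact hY0Y (Finset.orderEmbOfFin_mem Y0 hY0card (ι0 j))
          have e1 : (σ ∘ ι) = ⇑(s.orderEmbOfFin hcs) :=
            Finset.orderEmbOfFin_unique hcs
              (fun x => Finset.mem_image_of_mem _ (Finset.mem_univ x)) (hσmono.comp hι)
          have e0 : (σ ∘ ι0) = ⇑(s0.orderEmbOfFin hcs0) :=
            Finset.orderEmbOfFin_unique hcs0
              (fun x => Finset.mem_image_of_mem _ (Finset.mem_univ x)) (hσmono.comp hι0'.1)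
          have hcolor : colorX G B2 τ s = colorX G B2 τ s0 :=
            (ha s hsY hcs).trans (ha s0 hs0Y hcs0).symm
          have heval := congrFun (congrFun hcolor ⟨m, by omega⟩) J
          rw [colorX_eval G B2 τ m (by omega) s hcs J,
            colorX_eval G B2 τ m (by omega) s0 hcs0 J] at heval
          have hiff := decide_eq_decide.mp heval
          have : RainbowCopy G B2 J (fun j => s.orderEmbOfFin hcs j) := by
            apply hiff.mpr
            have h0 := hι0'.2
            rw [e0] at h0
            exact h0
          rw [e1]
          exact this
    · -- support invariant
      intro D hD hDw m hm J hJ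
      have hB2ne : ∀ j, (B2 j).Nonempty := fun j =>
        Finset.card_pos.mp (by rw [hB2card j]; omega)
      set E : Fin K → Finset V :=
        fun j => if h : ∃ i, σ i = j then D (Classical.choose h) else B2 j with hE
      have hEσ : ∀ i, E (σ i) = D i := by
        intro i
        have hex : ∃ i', σ i' = σ i := ⟨i, rfl⟩
        rw [hE]
        simp only
        rw [dif_pos hex]
        congr 1
        exact hσmono.injective (Classical.choose_spec hex)
      have hcontrE : IsContraction E B2 := by
        intro j
        by_cases h : ∃ i, σ i = j
        · rw [hE]; simp only; rw [dif_pos h]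
          have hspec := Classical.choose_spec h
          refine ⟨(hD (Classical.choose h)).1, ?_⟩
          intro x hx
          have hx2 := (hD (Classical.choose h)).2 hx
          rw [← hspec]
          exact hx2
        · rw [hE]; simp only; rw [dif_neg h]
          exact ⟨hB2ne j, Finset.Subset.refl _⟩
      have hwidE : ∀ j, κ * (blockWidth B2 : ℝ) ≤ ((E j).card : ℝ) := by
        intro j
        rw [hBW2]
        by_cases h : ∃ i, σ i = j
        · rw [hE]; simp only; rw [dif_pos h]
          have := hDw (Classical.choose h)
          rwa [hBW'] at this
        · rw [hE]; simp only; rw [dif_neg h]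
          rw [hB2card j]
          nlinarith [(Nat.cast_pos (α := ℝ)).mpr (show 0 < w2 by omega)]
      have hTr := hB2inv E hcontrE hwidE m hm J hJ
      ext ι
      simp only [Trace, Set.mem_setOf_eq]
      constructor
      · rintro ⟨hι, f, hf, hadj⟩
        exact ⟨hι, f, fun a => (hD (ι a)).2 (hf a), hadj⟩
      · rintro ⟨hι, f, hf, hadj⟩
        have hmem : (σ ∘ ι) ∈ Trace G B2 J := ⟨hσmono.comp hι, f, hf, hadj⟩
        rw [← hTr] at hmem
        obtain ⟨_, g, hg, hgadj⟩ := hmem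
        refine ⟨hι, g, fun a => ?_, hgadj⟩
        have hga : g a ∈ E (σ (ι a)) := hg a
        rwa [hEσ (ι a)] at hga
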